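/- Let 0 < p_a ≤ 1/2 and let n ≥ 2 and d ≥ 1 be integers. Let X₁, …, X_d be independent random variables, each geometrically distributed with Pr[X_i = k] = p_a^k (1 − p_a) for k = 0, 1, 2, …. Then Pr[X₁ + ⋯ + X_d > 7d/(1−p_a) + 6 ln n] ≤ 1/n². -/

import Mathlib

open MeasureTheory
open scoped ENNReal

/-- if `X₁, …, X_d` are independent geometric random variables with
`Pr[Xᵢ = k] = p_a^k (1 − p_a)`, where `0 < p_a ≤ 1/2`, then
`Pr[X₁ + ⋯ + X_d > 7d/(1−p_a) + 6 ln n] ≤ 1/n²`. -/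
theorem stmt1 {Ω : Type} [MeasurableSpace Ω] (μ : Measure Ω) [IsProbabilityMeasure μ]
    (p_a : ℝ) (hpa0 : 0 < p_a) (hpa : p_a ≤ 1 / 2)
    (n d : ℕ) (hn : 2 ≤ n) (hd : 1 ≤ d)
    (X : Fin d → Ω → ℕ) (hmeas : ∀ i, Measurable (X i))
    (hindep : ProbabilityTheory.iIndepFun X μ)
    (hgeom : ∀ (i : Fin d) (k : ℕ), μ {ω | X i ω = k} = ENNReal.ofReal (p_a ^ k * (1 - p_a))) :
    μ {ω | 7 * d / (1 - p_a) + 6 * Real.log n < ∑ i, (X i ω : ℝ)} ≤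
      1 / (n : ENNReal) ^ 2 := by
  classical
  have hpalt1 : p_a < 1 := lt_of_le_of_lt hpa (by norm_num)
  set q : ℝ := 1 - p_a with hqdef
  have hq0 : 0 < q := by simp only [hqdef]; linarith
  have hqhalf : 1/2 ≤ q := by simp only [hqdef]; linarith
  have hqlt1 : q < 1 := by simp only [hqdef]; linarith
  set r : ℝ := (3 - q) / (3 * p_a) with hrdef
  have h3pa : 0 < 3 * p_a := by linarith
  have hr0 : 0 < r := div_pos (by linarith) h3pa
  have hr1 : 1 < r := by
    rw [hrdef, lt_div_iff₀ h3pa]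
    simp only [hqdef]; linarith
  set R : ℝ≥0∞ := ENNReal.ofReal r with hRdef
  set m : ℝ := 7 * (d:ℝ) / q + 6 * Real.log n with hmdef
  have hd1 : (1:ℝ) ≤ (d:ℝ) := by exact_mod_cast hd
  have hlogn : 0 ≤ Real.log n := Real.log_nonneg (by exact_mod_cast le_trans (by norm_num) hn)
  have hm0 : 0 < m := by
    have h1 : 0 < 7 * (d:ℝ) / q := div_pos (by linarith) hq0
    rw [hmdef]; linarith
  have hYmeas : ∀ i : Fin d, Measurable fun ω => R ^ (X i ω) :=
    fun i => (measurable_from_top).comp (hmeas i)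
  -- per-variable exponential moment
  have hmgf : ∀ i : Fin d, ∫⁻ ω, R ^ (X i ω) ∂μ = ENNReal.ofReal 3 := by
    intro i
    have hmap : ∀ k : ℕ, (μ.map (X i)) {k} = ENNReal.ofReal (p_a ^ k * q) := by
      intro k
      rw [Measure.map_apply (hmeas i) (measurableSet_singleton k)]
      exact hgeom i k
    have hlm := lintegral_map (μ := μ) (f := fun k : ℕ => R ^ k) (g := X i)
      measurable_from_top (hmeas i)
    rw [← hlm, lintegral_countable' (fun k : ℕ => R ^ k)]
    have hterm : ∀ k : ℕ, R ^ k * (μ.map (X i)) {k}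
        = ENNReal.ofReal (((3 - q)/3) ^ k * q) := by
      intro k
      rw [hmap k, hRdef, ← ENNReal.ofReal_pow hr0.le,
        ← ENNReal.ofReal_mul (by positivity)]
      congr 1
      rw [← mul_assoc, ← mul_pow]
      have : r * p_a = (3 - q)/3 := by
        rw [hrdef]; field_simp
      rw [this]
    rw [tsum_congr hterm]
    have hs0 : (0:ℝ) ≤ (3 - q)/3 := by linarith [div_nonneg (by linarith : (0:ℝ) ≤ 3 - q) (by norm_num : (0:ℝ) ≤ 3)]
    have hs1 : (3 - q)/3 < 1 := by rw [div_lt_one (by norm_num : (0:ℝ) < 3)]; linarith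
    have hsummable : Summable (fun k : ℕ => ((3 - q)/3) ^ k * q) :=
      (summable_geometric_of_lt_one hs0 hs1).mul_right q
    rw [← ENNReal.ofReal_tsum_of_nonneg (fun k => by positivity) hsummable]
    congr 1
    rw [tsum_mul_right, tsum_geometric_of_lt_one hs0 hs1]
    have h13 : 1 - (3 - q)/3 = q/3 := by ring
    rw [h13]
    field_simp
  -- independence of the exponentials
  have hYindep : ProbabilityTheory.iIndepFun
      (fun i ω => R ^ (X i ω)) μ :=
    hindep.comp (fun _ (k : ℕ) => R ^ k) (fun _ => measurable_from_top)
  -- product formula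
  have key : ∀ s : Finset (Fin d),
      ∫⁻ ω, ∏ i ∈ s, R ^ (X i ω) ∂μ = ∏ i ∈ s, ∫⁻ ω, R ^ (X i ω) ∂μ := by
    intro s
    induction s using Finset.induction_on with
    | empty => simp
    | @insert i s hi ih =>
      have hfg : (∏ j ∈ s, fun ω => R ^ (X j ω)) = fun ω => ∏ j ∈ s, R ^ (X j ω) := by
        funext ω; simp
      have hindep2 : ProbabilityTheory.IndepFun
          (fun ω => R ^ (X i ω)) (fun ω => ∏ j ∈ s, R ^ (X j ω)) μ := by
        have h := (hYindep.indepFun_finsetProd_of_notMem hYmeas hi).symm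
        rwa [hfg] at h
      have hprodmeas : Measurable (fun ω => ∏ j ∈ s, R ^ (X j ω)) :=
        Finset.measurable_prod s (fun j _ => hYmeas j)
      have hmul := ProbabilityTheory.lintegral_mul_eq_lintegral_mul_lintegral_of_indepFun
        (hYmeas i) hprodmeas hindep2
      simp only [Pi.mul_apply] at hmul
      simp only [Finset.prod_insert hi]
      rw [hmul, ih]
  have hprod : ∫⁻ ω, ∏ i, R ^ (X i ω) ∂μ = ENNReal.ofReal 3 ^ d := by
    rw [key Finset.univ]
    simp [hmgf, Finset.prod_const, Finset.card_univ]
  -- event inclusion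
  set B : ℝ≥0∞ := ENNReal.ofReal (r ^ m) with hBdef
  have hrm0 : (0:ℝ) < r ^ m := Real.rpow_pos_of_pos hr0 m
  have hB0 : B ≠ 0 := by
    simp only [hBdef, ne_eq, ENNReal.ofReal_eq_zero, not_le]
    exact hrm0
  have hBtop : B ≠ ⊤ := ENNReal.ofReal_ne_top
  have hsub : {ω | m < ∑ i, (X i ω : ℝ)} ⊆ {ω | B ≤ ∏ i, R ^ (X i ω)} := by
    intro ω hω
    simp only [Set.mem_setOf_eq] at hω ⊢
    have h1 : ∏ i, R ^ (X i ω) = R ^ (∑ i, X i ω) :=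
      Finset.prod_pow_eq_pow_sum Finset.univ (fun i => X i ω) R
    have hsum : ((∑ i, X i ω : ℕ) : ℝ) = ∑ i, (X i ω : ℝ) := by push_cast; ring
    rw [h1, hRdef, ← ENNReal.ofReal_pow hr0.le]
    apply ENNReal.ofReal_le_ofReal
    calc r ^ m ≤ r ^ ((∑ i, X i ω : ℕ) : ℝ) :=
          Real.rpow_le_rpow_of_exponent_le hr1.le (by rw [hsum]; exact hω.le)
      _ = r ^ (∑ i, X i ω) := Real.rpow_natCast r _
  -- key real inequality: 3^d * n^2 ≤ r^m
  have hlogr : 2*q/3 ≤ Real.log r := by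
    have h1 : Real.log (1/r) ≤ 1/r - 1 := Real.log_le_sub_one_of_pos (by positivity)
    rw [one_div, Real.log_inv] at h1
    have h2 : 1/r = 3*(1-q)/(3-q) := by
      rw [hrdef]
      rw [one_div_div]
      congr 1
      simp only [hqdef]; ring
    have h3 : 3*(1-q)/(3-q) ≤ 1 - 2*q/3 := by
      rw [div_le_iff₀ (by linarith : (0:ℝ) < 3 - q)]
      nlinarith [sq_nonneg q]
    rw [one_div] at h2
    rw [← h2] at h3
    linarith
  have hlog3 : Real.log 3 ≤ 2 := by
    linarith [Real.log_le_sub_one_of_pos (by norm_num : (0:ℝ) < 3)]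
  have hexp : (d:ℝ) * Real.log 3 + 2 * Real.log n ≤ m * Real.log r := by
    have hmlq : m * (2*q/3) = 14*(d:ℝ)/3 + 4*q*Real.log n := by
      rw [hmdef]; field_simp; ring
    have hstep : m * (2*q/3) ≤ m * Real.log r :=
      mul_le_mul_of_nonneg_left hlogr hm0.le
    have e1 : 0 ≤ (4*q - 2) * Real.log n :=
      mul_nonneg (by linarith) hlogn
    have e2 : 0 ≤ (d:ℝ) * (2 - Real.log 3) :=
      mul_nonneg (by linarith) (by linarith)
    have h5 : 14*(d:ℝ)/3 + 4*q*Real.log n ≤ m * Real.log r := by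
      rw [← hmlq]; exact hstep
    have h6 : (d:ℝ) * Real.log 3 + 2 * Real.log n ≤ 14*(d:ℝ)/3 + 4*q*Real.log n := by
      nlinarith [e1, e2, hd1]
    exact le_trans h6 h5
  have hkey : (3:ℝ) ^ d * (n:ℝ) ^ 2 ≤ r ^ m := by
    have hn0 : (0:ℝ) < (n:ℝ) := by exact_mod_cast lt_of_lt_of_le (by norm_num) hn
    have h3d : (3:ℝ) ^ d = Real.exp ((d:ℝ) * Real.log 3) := by
      rw [← Real.exp_log (by norm_num : (0:ℝ) < 3), ← Real.exp_nat_mul]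
      simp
    have hn2 : (n:ℝ) ^ 2 = Real.exp (2 * Real.log n) := by
      rw [← Real.exp_log hn0, ← Real.exp_nat_mul]
      simp
    have hrm : r ^ m = Real.exp (Real.log r * m) := Real.rpow_def_of_pos hr0 m
    rw [h3d, hn2, hrm, ← Real.exp_add]
    apply Real.exp_le_exp.mpr
    rw [mul_comm (Real.log r) m]
    exact hexp
  -- finish
  have hnn0 : ((n:ℝ≥0∞)) ^ 2 ≠ 0 := by
    exact pow_ne_zero 2 (Nat.cast_ne_zero.mpr (by omega))
  have hnntop : ((n:ℝ≥0∞)) ^ 2 ≠ ⊤ := by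
    exact ENNReal.pow_ne_top (ENNReal.natCast_ne_top n)
  calc μ {ω | m < ∑ i, (X i ω : ℝ)}
      ≤ μ {ω | B ≤ ∏ i, R ^ (X i ω)} := measure_mono hsub
    _ ≤ (∫⁻ ω, ∏ i, R ^ (X i ω) ∂μ) / B :=
        meas_ge_le_lintegral_div
          ((Finset.measurable_prod Finset.univ (fun i _ => hYmeas i)).aemeasurable)
          hB0 hBtop
    _ = ENNReal.ofReal 3 ^ d / B := by rw [hprod]
    _ ≤ 1 / (n : ℝ≥0∞) ^ 2 := by
        rw [ENNReal.div_le_iff hB0 hBtop]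
        have hrhs : 1 / (n : ℝ≥0∞) ^ 2 * B = B / (n : ℝ≥0∞) ^ 2 := by
          rw [one_div, mul_comm, div_eq_mul_inv]
        rw [hrhs, ENNReal.le_div_iff_mul_le (Or.inl hnn0) (Or.inl hnntop)]
        have hl : ENNReal.ofReal 3 ^ d * (n : ℝ≥0∞) ^ 2
            = ENNReal.ofReal ((3:ℝ) ^ d * (n:ℝ) ^ 2) := by
          rw [ENNReal.ofReal_mul (by positivity), ENNReal.ofReal_pow (by norm_num : (0:ℝ) ≤ 3),
            ENNReal.ofReal_pow (by positivity), ENNReal.ofReal_natCast]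
        rw [hl]
        exact ENNReal.ofReal_le_ofReal hkey
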